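/- Let (N_n)_{n≥0} be a sequence of nonnegative integers with N_n ≤ 2^{-(n-2)} M for all n and Σ_n N_n = K (finitely many nonzero terms), and let (a_n) be a sequence with 0 < a_n ≤ 1 and Σ_{n=0}^∞ 2^{-n} log(1/a_n) = B < ∞. Then for any n₀ ∈ ℕ, ∏_{n=0}^∞ a_n^{-N_n} ≤ a_{n₀}^{-K'} exp(4M Σ_{n=n₀+1}^∞ 2^{-n} log(1/a_n)), where K' = Σ_{n≤n₀} N_n ≤ K and (a_n) is non-increasing. -/

import Mathlib

open scoped BigOperators

/-- Key counting estimate: a product of small divisors, with the number `N n` of factors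
on scale `n` bounded by `2^{-(n-2)} M = 4 M / 2^n`, is bounded by separating the scales
below and above a threshold `n₀`. -/
theorem small_divisor_product_bound (a : ℕ → ℝ) (N : ℕ → ℕ) (M : ℝ) (hM : 0 ≤ M)
    (ha : ∀ n, 0 < a n) (ha1 : ∀ n, a n ≤ 1) (hmono : Antitone a)
    (hsum : Summable (fun n : ℕ => (1 / 2 ^ n : ℝ) * Real.log (1 / a n)))
    (hN : ∀ n : ℕ, (N n : ℝ) ≤ 4 * M / 2 ^ n)
    (m K : ℕ) (hm : ∀ n, m ≤ n → N n = 0) (hK : K = ∑ n ∈ Finset.range m, N n) :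
    ∀ n₀ : ℕ,
      (∏ n ∈ Finset.range m, a n ^ (-(N n : ℤ)))
        ≤ a n₀ ^ (-((∑ n ∈ Finset.range (n₀ + 1), N n : ℕ) : ℤ)) *
          Real.exp (4 * M *
            ∑' n : ℕ, (1 / 2 ^ (n + n₀ + 1) : ℝ) * Real.log (1 / a (n + n₀ + 1))) ∧
      (∑ n ∈ Finset.range (n₀ + 1), N n) ≤ K := by
  intro n₀
  set L := max m (n₀ + 1) with hL
  have hm' : m ≤ L := le_max_left _ _
  have hn0' : n₀ + 1 ≤ L := le_max_right _ _
  have hlog : ∀ n, 0 ≤ Real.log (1 / a n) := fun n =>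
    Real.log_nonneg (one_le_one_div (ha n) (ha1 n))
  have hrw : ∀ (n : ℕ) (k : ℕ), a n ^ (-(k : ℤ)) = (a n)⁻¹ ^ k := by
    intro n k
    rw [zpow_neg, zpow_natCast, inv_pow]
  -- sums
  have hsumL : ∑ n ∈ Finset.range L, N n = K := by
    rw [hK]
    symm
    apply Finset.sum_subset (Finset.range_subset_range.2 hm')
    intro x _ hx
    exact hm x (by simpa using hx)
  have hKle : ∑ n ∈ Finset.range (n₀ + 1), N n ≤ K := by
    rw [← hsumL]
    exact Finset.sum_le_sum_of_subset (Finset.range_subset_range.2 hn0')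
  refine ⟨?_, hKle⟩
  have hprod : (∏ n ∈ Finset.range m, a n ^ (-(N n : ℤ)))
      = ∏ n ∈ Finset.range L, (a n)⁻¹ ^ N n := by
    simp_rw [hrw]
    refine Finset.prod_subset (Finset.range_subset_range.2 hm') ?_
    intro x _ hx
    rw [hm x (by simpa using hx), pow_zero]
  have hsplit : (∏ n ∈ Finset.range L, (a n)⁻¹ ^ N n)
      = (∏ n ∈ Finset.range (n₀ + 1), (a n)⁻¹ ^ N n) *
        ∏ n ∈ Finset.Ico (n₀ + 1) L, (a n)⁻¹ ^ N n := by
    rw [Finset.range_eq_Ico, Finset.range_eq_Ico]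
    exact (Finset.prod_Ico_consecutive _ (Nat.zero_le _) hn0').symm
  have hA : (∏ n ∈ Finset.range (n₀ + 1), (a n)⁻¹ ^ N n)
      ≤ (a n₀)⁻¹ ^ (∑ n ∈ Finset.range (n₀ + 1), N n) := by
    rw [← Finset.prod_pow_eq_pow_sum]
    refine Finset.prod_le_prod (fun i _ => pow_nonneg (inv_nonneg.2 (ha i).le) _) ?_
    intro i hi
    exact pow_le_pow_left₀ (inv_nonneg.2 (ha i).le)
      (inv_anti₀ (ha n₀) (hmono (Nat.lt_succ_iff.1 (Finset.mem_range.1 hi)))) _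
  have hB : (∏ n ∈ Finset.Ico (n₀ + 1) L, (a n)⁻¹ ^ N n)
      ≤ Real.exp (4 * M * ∑ n ∈ Finset.Ico (n₀ + 1) L, (1 / 2 ^ n : ℝ) * Real.log (1 / a n)) := by
    rw [Finset.mul_sum, Real.exp_sum]
    refine Finset.prod_le_prod (fun i _ => pow_nonneg (inv_nonneg.2 (ha i).le) _) ?_
    intro i _
    have h1 : (a i)⁻¹ ^ N i = Real.exp ((N i : ℝ) * Real.log (1 / a i)) := by
      rw [one_div, ← Real.log_pow, Real.exp_log (pow_pos (inv_pos.2 (ha i)) _)]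
    rw [h1, Real.exp_le_exp]
    calc (N i : ℝ) * Real.log (1 / a i)
        ≤ (4 * M / 2 ^ i) * Real.log (1 / a i) :=
          mul_le_mul_of_nonneg_right (hN i) (hlog i)
      _ = 4 * M * ((1 / 2 ^ i : ℝ) * Real.log (1 / a i)) := by ring
  have hsumshift : Summable (fun n : ℕ => (1 / 2 ^ (n + n₀ + 1) : ℝ) * Real.log (1 / a (n + n₀ + 1))) := by
    have h := (summable_nat_add_iff
      (f := fun n : ℕ => (1 / 2 ^ n : ℝ) * Real.log (1 / a n)) (n₀ + 1)).2 hsum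
    simpa [← add_assoc] using h
  have htail : ∑ n ∈ Finset.Ico (n₀ + 1) L, (1 / 2 ^ n : ℝ) * Real.log (1 / a n)
      ≤ ∑' n : ℕ, (1 / 2 ^ (n + n₀ + 1) : ℝ) * Real.log (1 / a (n + n₀ + 1)) := by
    rw [Finset.sum_Ico_eq_sum_range]
    simp_rw [add_comm (n₀ + 1)]
    exact Summable.sum_le_tsum _ (fun i _ => mul_nonneg (by positivity) (hlog _)) hsumshift
  have hB' : (∏ n ∈ Finset.Ico (n₀ + 1) L, (a n)⁻¹ ^ N n)
      ≤ Real.exp (4 * M * ∑' n : ℕ, (1 / 2 ^ (n + n₀ + 1) : ℝ) * Real.log (1 / a (n + n₀ + 1))) :=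
    hB.trans (Real.exp_le_exp.2 (mul_le_mul_of_nonneg_left htail (by linarith)))
  rw [hprod, hsplit, hrw]
  refine mul_le_mul hA hB' (Finset.prod_nonneg fun i _ => pow_nonneg (inv_nonneg.2 (ha i).le) _)
    (pow_nonneg (inv_nonneg.2 (ha n₀).le) _)
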